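/- arXiv:2005.06869 — 4 statements merged into one kernel-verified Lean document; each statement's English description precedes it below -/
import Mathlib

section
/- For every natural number m ≥ 1 and every real x ≥ 0, the sum over k from 1 to m of min(x/k, k/m) is at least c · min(m, x + x·log₊(min(m, √(m/x)))) for some absolute constant c > 0 (e.g., c = 1/8), where log₊(t) = max(0, log t). -/
open Finset Real

private lemma harm (a b : ℕ) (ha : 1 ≤ a) :
    Real.log (((b : ℝ) + 1) / (a : ℝ)) ≤ ∑ k ∈ Finset.Icc a b, (1 : ℝ) / (k : ℝ) := by
  have ha0 : (0:ℝ) < (a:ℝ) := by exact_mod_cast Nat.lt_of_lt_of_le Nat.zero_lt_one ha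
  have ha1 : (1:ℝ) ≤ (a:ℝ) := by exact_mod_cast ha
  induction b with
  | zero =>
      have h : Finset.Icc a 0 = ∅ := by
        apply Finset.Icc_eq_empty; omega
      rw [h, Finset.sum_empty]
      apply Real.log_nonpos (by positivity)
      rw [div_le_one ha0]; push_cast; linarith
  | succ b ih =>
      by_cases hab : a ≤ b + 1
      · rw [Finset.sum_Icc_succ_top hab]
        have hb1 : (0:ℝ) < (b:ℝ) + 1 := by positivity
        have hb2 : (0:ℝ) < (b:ℝ) + 2 := by positivity
        have h1 : Real.log (((b:ℝ) + 2) / ((b:ℝ) + 1)) ≤ 1 / ((b:ℝ) + 1) := by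
          have := Real.log_le_sub_one_of_pos (show (0:ℝ) < ((b:ℝ)+2)/((b:ℝ)+1) by positivity)
          have h2 : ((b:ℝ)+2)/((b:ℝ)+1) - 1 = 1/((b:ℝ)+1) := by
            field_simp
            norm_num
          linarith
        have h3 : Real.log (((b:ℝ) + 2) / (a:ℝ)) =
            Real.log (((b:ℝ) + 1) / (a:ℝ)) + Real.log (((b:ℝ) + 2) / ((b:ℝ) + 1)) := by
          rw [Real.log_div hb2.ne' ha0.ne', Real.log_div hb1.ne' ha0.ne',
            Real.log_div hb2.ne' hb1.ne']
          ring
        push_cast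
        push_cast at ih
        rw [show (b:ℝ) + 1 + 1 = (b:ℝ) + 2 by ring, h3]
        linarith
      · have h : Finset.Icc a (b + 1) = ∅ := by
          apply Finset.Icc_eq_empty; omega
        rw [h, Finset.sum_empty]
        apply Real.log_nonpos (by positivity)
        rw [div_le_one ha0]
        push_cast
        have : (b:ℝ) + 2 ≤ (a:ℝ) := by exact_mod_cast (by omega : b + 2 ≤ a)
        linarith

set_option maxHeartbeats 1000000 in
theorem stmt0 :
    ∃ c : ℝ, 0 < c ∧ ∀ (m : ℕ), 1 ≤ m → ∀ x : ℝ, 0 ≤ x →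
      ∑ k ∈ Finset.Icc 1 m, min (x / (k : ℝ)) ((k : ℝ) / (m : ℝ)) ≥
        c * min (m : ℝ)
          (x + x * max 0 (Real.log (min (m : ℝ) (Real.sqrt ((m : ℝ) / x))))) := by
  refine ⟨1/32, by norm_num, ?_⟩
  intro m hm x hx
  have hM : (1:ℝ) ≤ (m:ℝ) := by exact_mod_cast hm
  have hM0 : (0:ℝ) < (m:ℝ) := lt_of_lt_of_le one_pos hM
  rw [ge_iff_le]
  rcases eq_or_lt_of_le hx with hx0 | hx0
  · -- x = 0
    have hL : ∀ k ∈ Finset.Icc 1 m, min (x / (k:ℝ)) ((k:ℝ)/(m:ℝ)) = 0 := by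
      intro k hk
      rw [Finset.mem_Icc] at hk
      have hk0 : (0:ℝ) < (k:ℝ) := by exact_mod_cast hk.1
      rw [← hx0, zero_div]
      exact min_eq_left (by positivity)
    rw [Finset.sum_congr rfl hL, Finset.sum_const, smul_zero, ← hx0, zero_mul, zero_add,
      min_eq_right hM0.le]
    norm_num
  by_cases hcase : (m:ℝ)/16 ≤ x
  · -- Case A : x large
    have key : ∀ k ∈ Finset.Icc 1 m, (k:ℝ)/(16*(m:ℝ)) ≤ min (x/(k:ℝ)) ((k:ℝ)/(m:ℝ)) := by
      intro k hk
      rw [Finset.mem_Icc] at hk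
      have hk0 : (0:ℝ) < (k:ℝ) := by exact_mod_cast hk.1
      have hkm : (k:ℝ) ≤ (m:ℝ) := by exact_mod_cast hk.2
      refine le_min ?_ ?_
      · rw [div_le_div_iff₀ (by positivity) hk0]
        nlinarith
      · rw [div_le_div_iff₀ (by positivity) hM0]
        nlinarith
    have hr : Finset.range (m+1) = insert 0 (Finset.Icc 1 m) := by
      ext k; simp [Finset.mem_range, Finset.mem_Icc]; omega
    have hg : (∑ i ∈ Finset.Icc 1 m, i) * 2 = m * (m+1) := by
      have h1 := Finset.sum_range_id_mul_two (m+1)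
      rw [hr, Finset.sum_insert (by simp)] at h1
      simpa [Nat.mul_comm] using h1
    have hg' : (∑ k ∈ Finset.Icc 1 m, (k:ℝ)) * 2 = (m:ℝ) * ((m:ℝ)+1) := by
      have h2 : ((∑ i ∈ Finset.Icc 1 m, i : ℕ) : ℝ) * 2 = (m:ℝ) * ((m:ℝ)+1) := by
        exact_mod_cast congrArg (Nat.cast (R := ℝ)) hg
      rw [Nat.cast_sum] at h2
      exact h2
    have hsum : (m:ℝ)/32 ≤ ∑ k ∈ Finset.Icc 1 m, (k:ℝ)/(16*(m:ℝ)) := by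
      rw [← Finset.sum_div, le_div_iff₀ (by positivity)]
      nlinarith
    calc (1:ℝ)/32 * min (m:ℝ) (x + x * max 0 (Real.log (min (m:ℝ) (Real.sqrt ((m:ℝ)/x)))))
        ≤ 1/32 * (m:ℝ) := by
          have := min_le_left (m:ℝ) (x + x * max 0 (Real.log (min (m:ℝ) (Real.sqrt ((m:ℝ)/x)))))
          nlinarith
      _ ≤ ∑ k ∈ Finset.Icc 1 m, (k:ℝ)/(16*(m:ℝ)) := by linarith
      _ ≤ ∑ k ∈ Finset.Icc 1 m, min (x/(k:ℝ)) ((k:ℝ)/(m:ℝ)) := Finset.sum_le_sum key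
  · -- Case B : x small
    push_neg at hcase
    set t := Real.sqrt ((m:ℝ) * x) with htdef
    have htx : (0:ℝ) < (m:ℝ) * x := by positivity
    have ht0 : 0 < t := Real.sqrt_pos.mpr htx
    have ht2 : t^2 = (m:ℝ) * x := Real.sq_sqrt htx.le
    have htM4 : t ≤ (m:ℝ)/4 := by nlinarith
    set K := ⌈t⌉₊ with hKdef
    have hK1 : 1 ≤ K := Nat.ceil_pos.mpr ht0
    have hKt : t ≤ (K:ℝ) := Nat.le_ceil t
    have hKt1 : (K:ℝ) < t + 1 := Nat.ceil_lt_add_one ht0.le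
    have hKm : K ≤ m := by
      rw [Nat.ceil_le]
      linarith
    have hK0 : (0:ℝ) < (K:ℝ) := by exact_mod_cast hK1
    -- sum over the tail equals x/k there
    have hmono : ∑ k ∈ Finset.Icc K m, min (x/(k:ℝ)) ((k:ℝ)/(m:ℝ)) ≤
        ∑ k ∈ Finset.Icc 1 m, min (x/(k:ℝ)) ((k:ℝ)/(m:ℝ)) := by
      apply Finset.sum_le_sum_of_subset_of_nonneg (Finset.Icc_subset_Icc_left hK1)
      intro k hk _
      rw [Finset.mem_Icc] at hk
      have hk0 : (0:ℝ) < (k:ℝ) := by exact_mod_cast hk.1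
      exact le_min (by positivity) (by positivity)
    have heq : ∑ k ∈ Finset.Icc K m, min (x/(k:ℝ)) ((k:ℝ)/(m:ℝ)) =
        ∑ k ∈ Finset.Icc K m, x * (1/(k:ℝ)) := by
      apply Finset.sum_congr rfl
      intro k hk
      rw [Finset.mem_Icc] at hk
      have hkK : (K:ℝ) ≤ (k:ℝ) := by exact_mod_cast hk.1
      have hk0 : (0:ℝ) < (k:ℝ) := lt_of_lt_of_le hK0 hkK
      have hkt : t ≤ (k:ℝ) := le_trans hKt hkK
      rw [mul_one_div]
      apply min_eq_left
      rw [div_le_div_iff₀ hk0 hM0]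
      nlinarith
    have hharm := harm K m hK1
    have hsum2 : x * Real.log (((m:ℝ)+1)/(K:ℝ)) ≤ ∑ k ∈ Finset.Icc K m, x * (1/(k:ℝ)) := by
      rw [← Finset.mul_sum]
      exact mul_le_mul_of_nonneg_left hharm hx
    -- bound on L
    have hsqrt : Real.sqrt ((m:ℝ)/x) = (m:ℝ)/t := by
      have h1 : ((m:ℝ)/t)^2 = (m:ℝ)/x := by
        rw [div_pow, ht2]
        field_simp
      rw [← h1, Real.sqrt_sq (by positivity)]
    have hmt1 : (4:ℝ) ≤ (m:ℝ)/t := by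
      rw [le_div_iff₀ ht0]; linarith
    have hminpos : (0:ℝ) < min (m:ℝ) ((m:ℝ)/t) := lt_min hM0 (by positivity)
    have hLt : max 0 (Real.log (min (m:ℝ) (Real.sqrt ((m:ℝ)/x)))) ≤ Real.log ((m:ℝ)/t) := by
      rw [hsqrt]
      apply max_le (Real.log_nonneg (by linarith))
      exact Real.log_le_log hminpos (min_le_right _ _)
    have hLm : max 0 (Real.log (min (m:ℝ) (Real.sqrt ((m:ℝ)/x)))) ≤ Real.log (m:ℝ) := by
      rw [hsqrt]
      apply max_le (Real.log_nonneg hM)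
      exact Real.log_le_log hminpos (min_le_left _ _)
    have hlog2 := Real.log_two_gt_d9
    have hgoal : (1 + max 0 (Real.log (min (m:ℝ) (Real.sqrt ((m:ℝ)/x)))))/32 ≤
        Real.log (((m:ℝ)+1)/(K:ℝ)) := by
      by_cases ht1 : t < 1
      · -- K = 1
        have hKone : K = 1 := le_antisymm (by rw [Nat.ceil_le]; push_cast; linarith) hK1
        rw [hKone]
        push_cast
        rw [div_one]
        have h2m : Real.log 2 ≤ Real.log ((m:ℝ)+1) :=
          Real.log_le_log (by norm_num) (by linarith)
        have hmm1 : Real.log (m:ℝ) ≤ Real.log ((m:ℝ)+1) :=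
          Real.log_le_log hM0 (by linarith)
        linarith
      · push_neg at ht1
        have hK2t : (K:ℝ) ≤ 2*t := by linarith
        have hdiv : (m:ℝ)/(2*t) ≤ ((m:ℝ)+1)/(K:ℝ) := by
          rw [div_le_div_iff₀ (by positivity) hK0]
          nlinarith
        have hlog1 : Real.log ((m:ℝ)/(2*t)) ≤ Real.log (((m:ℝ)+1)/(K:ℝ)) :=
          Real.log_le_log (by positivity) hdiv
        have hlog2' : Real.log ((m:ℝ)/(2*t)) = Real.log ((m:ℝ)/t) - Real.log 2 := by
          rw [show (m:ℝ)/(2*t) = ((m:ℝ)/t)/2 by ring,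
            Real.log_div (by positivity) two_ne_zero]
        have hy : 2 * Real.log 2 ≤ Real.log ((m:ℝ)/t) := by
          have h4 : Real.log 4 ≤ Real.log ((m:ℝ)/t) := Real.log_le_log (by norm_num) hmt1
          have h4' : Real.log 4 = 2 * Real.log 2 := by
            rw [show (4:ℝ) = 2^2 by norm_num, Real.log_pow]
            push_cast; ring
          linarith
        linarith
    calc (1:ℝ)/32 * min (m:ℝ) (x + x * max 0 (Real.log (min (m:ℝ) (Real.sqrt ((m:ℝ)/x)))))
        ≤ 1/32 * (x + x * max 0 (Real.log (min (m:ℝ) (Real.sqrt ((m:ℝ)/x))))) := by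
          have := min_le_right (m:ℝ) (x + x * max 0 (Real.log (min (m:ℝ) (Real.sqrt ((m:ℝ)/x)))))
          nlinarith
      _ = x * ((1 + max 0 (Real.log (min (m:ℝ) (Real.sqrt ((m:ℝ)/x)))))/32) := by ring
      _ ≤ x * Real.log (((m:ℝ)+1)/(K:ℝ)) := mul_le_mul_of_nonneg_left hgoal hx
      _ ≤ ∑ k ∈ Finset.Icc K m, x * (1/(k:ℝ)) := hsum2
      _ = ∑ k ∈ Finset.Icc K m, min (x/(k:ℝ)) ((k:ℝ)/(m:ℝ)) := heq.symm
      _ ≤ ∑ k ∈ Finset.Icc 1 m, min (x/(k:ℝ)) ((k:ℝ)/(m:ℝ)) := hmono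
end

section
/- Let e₁,…,e_p be the standard basis of ℝ^p, fix an index i, and let ξ = Σ_{j≠i} x_j (e_i e_jᵀ − e_j e_iᵀ) with Σ_{j≠i} x_j² = 1. Then for every real t, the matrix exponential satisfies exp(tξ)_{ii} = cos t and exp(tξ)_{ji} = −x_j sin t for every j ≠ i. -/
open Matrix

open Finset NormedSpace

theorem stmt5 (p : ℕ) (i : Fin p) (x : Fin p → ℝ)
    (hx : ∑ j ∈ Finset.univ.erase i, (x j) ^ 2 = 1)
    (ξ : Matrix (Fin p) (Fin p) ℝ)
    (hξ : ξ = ∑ j ∈ Finset.univ.erase i,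
      x j • (Matrix.single i j 1 - Matrix.single j i 1))
    (t : ℝ) :
    (NormedSpace.exp (t • ξ)) i i = Real.cos t ∧
    ∀ j : Fin p, j ≠ i → (NormedSpace.exp (t • ξ)) j i = -x j * Real.sin t := by
  -- entries of ξ
  have h1 : ξ i i = 0 := by
    subst hξ; simp [Matrix.sum_apply, Matrix.single]
  have h2 : ∀ j, j ≠ i → ξ j i = -x j := by
    subst hξ; intro j hj
    simp [Matrix.sum_apply, Matrix.single, hj, Ne.symm hj, Finset.sum_ite_eq']
  have h3 : ∀ b, b ≠ i → ξ i b = x b := by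
    subst hξ; intro b hb
    simp [Matrix.sum_apply, Matrix.single, hb, Ne.symm hb, Finset.sum_ite_eq']
  have h4 : ∀ a, a ≠ i → ∀ b, b ≠ i → ξ a b = 0 := by
    subst hξ; intro a ha b hb
    simp [Matrix.sum_apply, Matrix.single, ha, hb, Ne.symm ha, Ne.symm hb]
  clear hξ
  have split : ∀ f : Fin p → ℝ, ∑ m, f m = f i + ∑ m ∈ univ.erase i, f m := by
    intro f; rw [Finset.add_sum_erase _ f (mem_univ i)]
  -- entries of ξ²
  have hs1 : (ξ*ξ) i i = -1 := by
    rw [mul_apply, split, h1]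
    rw [Finset.sum_congr rfl (fun m hm => by
      rw [h3 m (Finset.ne_of_mem_erase hm), h2 m (Finset.ne_of_mem_erase hm)])]
    have e : ∑ m ∈ univ.erase i, x m * -x m = -∑ m ∈ univ.erase i, (x m)^2 := by
      rw [← Finset.sum_neg_distrib]
      exact Finset.sum_congr rfl fun m _ => by ring
    rw [e, hx]; ring
  have hs2 : ∀ j, j ≠ i → (ξ*ξ) j i = 0 := by
    intro j hj
    rw [mul_apply]
    refine Finset.sum_eq_zero fun m _ => ?_
    by_cases hm : m = i
    · rw [hm, h1, mul_zero]
    · rw [h4 j hj m hm, zero_mul]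
  have hs3 : ∀ b, b ≠ i → (ξ*ξ) i b = 0 := by
    intro b hb
    rw [mul_apply]
    refine Finset.sum_eq_zero fun m _ => ?_
    by_cases hm : m = i
    · rw [hm, h1, zero_mul]
    · rw [h4 m hm b hb, mul_zero]
  have hs4 : ∀ a, a ≠ i → ∀ b, b ≠ i → (ξ*ξ) a b = -(x a * x b) := by
    intro a ha b hb
    rw [mul_apply, split, h2 a ha, h3 b hb]
    rw [Finset.sum_eq_zero fun m hm => by
      rw [h4 a ha m (Finset.ne_of_mem_erase hm), zero_mul]]
    ring
  -- ξ³ = -ξ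
  have hcube : ξ^3 = -ξ := by
    ext a b
    rw [pow_succ, pow_two, mul_apply]
    by_cases ha : a = i <;> by_cases hb : b = i
    · rw [ha, hb, Matrix.neg_apply, h1, neg_zero]
      refine Finset.sum_eq_zero fun m _ => ?_
      by_cases hm : m = i
      · rw [hm, h1, mul_zero]
      · rw [hs3 m hm, zero_mul]
    · rw [ha, Matrix.neg_apply, h3 b hb, split, hs1, h3 b hb]
      rw [Finset.sum_eq_zero fun m hm => by
        rw [hs3 m (Finset.ne_of_mem_erase hm), zero_mul]]
      ring
    · rw [hb, Matrix.neg_apply, h2 a ha, split, h1, mul_zero]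
      rw [Finset.sum_congr rfl (fun m hm => by
        rw [hs4 a ha m (Finset.ne_of_mem_erase hm), h2 m (Finset.ne_of_mem_erase hm)])]
      have e : ∑ m ∈ univ.erase i, -(x a * x m) * -x m
          = x a * ∑ m ∈ univ.erase i, (x m)^2 := by
        rw [Finset.mul_sum]; exact Finset.sum_congr rfl fun m _ => by ring
      rw [e, hx]; ring
    · rw [Matrix.neg_apply, h4 a ha b hb, neg_zero, split, hs2 a ha, h3 b hb]
      rw [Finset.sum_eq_zero fun m hm => by
        rw [h4 m (Finset.ne_of_mem_erase hm) b hb, mul_zero]]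
      ring
  -- powers of ξ
  have hodd : ∀ k : ℕ, ξ^(2*k+1) = ((-1:ℝ)^k) • ξ := by
    intro k
    induction k with
    | zero => simp
    | succ k ih =>
      have hc2 : ξ * ξ^2 = -ξ := by
        calc ξ * ξ^2 = ξ^3 := (pow_succ' ξ 2).symm
        _ = -ξ := hcube
      have e : 2*(k+1)+1 = (2*k+1)+2 := by ring
      rw [e, pow_add, ih, smul_mul_assoc]
      rw [hc2, pow_succ, smul_neg, mul_neg_one, neg_smul]
  have heven : ∀ k : ℕ, ξ^(2*k+2) = ((-1:ℝ)^k) • (ξ*ξ) := by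
    intro k
    have e : 2*k+2 = (2*k+1)+1 := by ring
    rw [e, pow_succ, hodd k, smul_mul_assoc]
  -- the entrywise exponential series
  have key : ∀ j : Fin p, HasSum (fun n : ℕ => ((n.factorial : ℝ))⁻¹ • ((t • ξ) ^ n) j i)
      (exp (t • ξ) j i) := by
    intro j
    letI : NormedRing (Matrix (Fin p) (Fin p) ℝ) := Matrix.linftyOpNormedRing
    letI : NormedAlgebra ℝ (Matrix (Fin p) (Fin p) ℝ) := Matrix.linftyOpNormedAlgebra
    exact Pi.hasSum.mp (Pi.hasSum.mp (exp_series_hasSum_exp' (𝕂 := ℝ) (t • ξ)) j) i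
  constructor
  · have hinj : Function.Injective (fun k : ℕ => 2 * k) := fun a b h => by
      simp only at h; omega
    have hvan : ∀ n ∉ Set.range (fun k : ℕ => 2 * k),
        ((n.factorial : ℝ))⁻¹ • ((t • ξ) ^ n) i i = 0 := by
      intro n hn
      have hk : ∃ k, n = 2*k+1 := by
        rcases Nat.even_or_odd n with he | ho
        · obtain ⟨c, hc⟩ := he; exact absurd ⟨c, show 2*c = n by omega⟩ hn
        · obtain ⟨k, hk⟩ := ho; exact ⟨k, hk⟩
      obtain ⟨k, rfl⟩ := hk
      rw [smul_pow, hodd k]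
      simp [Matrix.smul_apply, h1]
    have hcomp : ((fun n : ℕ => ((n.factorial : ℝ))⁻¹ • ((t • ξ) ^ n) i i) ∘ fun k : ℕ => 2 * k)
        = fun k : ℕ => (-1)^k * t^(2*k) / ((2*k).factorial : ℝ) := by
      funext k
      show (((2*k).factorial : ℝ))⁻¹ • (((t • ξ) ^ (2*k)) i i)
        = (-1)^k * t^(2*k) / ((2*k).factorial : ℝ)
      cases k with
      | zero => simp
      | succ m =>
        have e : 2*(m+1) = 2*m+2 := by ring
        rw [e, smul_pow, heven m]
        simp only [Matrix.smul_apply, smul_eq_mul, hs1]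
        ring
    have Hcos := (hinj.hasSum_iff hvan).mp (hcomp ▸ Real.hasSum_cos t)
    exact (key i).unique Hcos
  · intro j hj
    have hinj : Function.Injective (fun k : ℕ => 2 * k + 1) := fun a b h => by
      simp only at h; omega
    have hvan : ∀ n ∉ Set.range (fun k : ℕ => 2 * k + 1),
        ((n.factorial : ℝ))⁻¹ • ((t • ξ) ^ n) j i = 0 := by
      intro n hn
      have hk : ∃ k, n = 2*k := by
        rcases Nat.even_or_odd n with he | ho
        · obtain ⟨c, hc⟩ := he; exact ⟨c, by omega⟩
        · obtain ⟨k, hk⟩ := ho; exact absurd ⟨k, show 2*k+1 = n by omega⟩ hn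
      obtain ⟨k, rfl⟩ := hk
      cases k with
      | zero => simp [Matrix.one_apply_ne hj]
      | succ m =>
        have e : 2*(m+1) = 2*m+2 := by ring
        rw [e, smul_pow, heven m]
        simp [Matrix.smul_apply, hs2 j hj]
    have hcomp : ((fun n : ℕ => ((n.factorial : ℝ))⁻¹ • ((t • ξ) ^ n) j i) ∘ fun k : ℕ => 2 * k + 1)
        = fun k : ℕ => -x j * ((-1)^k * t^(2*k+1) / ((2*k+1).factorial : ℝ)) := by
      funext k
      show (((2*k+1).factorial : ℝ))⁻¹ • (((t • ξ) ^ (2*k+1)) j i)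
        = -x j * ((-1)^k * t^(2*k+1) / ((2*k+1).factorial : ℝ))
      rw [smul_pow, hodd k]
      simp only [Matrix.smul_apply, smul_eq_mul, h2 j hj]
      ring
    have Hsin := (hinj.hasSum_iff hvan).mp (hcomp ▸ (Real.hasSum_sin t).mul_left (-x j))
    exact (key j).unique Hsin
end

section
/- If ℙ = ℙ₁ ⊗ ℙ₂ and ℚ = ℚ₁ ⊗ ℚ₂ are product probability measures with ℙ₁ ≪ ℚ₁ and ℙ₂ ≪ ℚ₂, then the chi-square divergence satisfies χ²(ℙ, ℚ) = (1 + χ²(ℙ₁, ℚ₁))(1 + χ²(ℙ₂, ℚ₂)) − 1. -/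
open MeasureTheory

/-- The chi-square divergence `χ²(P, Q) = ∫ (dP/dQ)² dQ − 1`. -/
noncomputable def chiSq {α : Type*} [MeasurableSpace α] (P Q : Measure α) : ℝ :=
  (∫ x, ((P.rnDeriv Q x).toReal) ^ 2 ∂Q) - 1

theorem stmt8 {α β : Type*} [MeasurableSpace α] [MeasurableSpace β]
    (P₁ Q₁ : Measure α) (P₂ Q₂ : Measure β)
    [IsProbabilityMeasure P₁] [IsProbabilityMeasure Q₁]
    [IsProbabilityMeasure P₂] [IsProbabilityMeasure Q₂]
    (h₁ : P₁ ≪ Q₁) (h₂ : P₂ ≪ Q₂)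
    (hi₁ : Integrable (fun x => ((P₁.rnDeriv Q₁ x).toReal) ^ 2) Q₁)
    (hi₂ : Integrable (fun x => ((P₂.rnDeriv Q₂ x).toReal) ^ 2) Q₂) :
    chiSq (P₁.prod P₂) (Q₁.prod Q₂) =
      (1 + chiSq P₁ Q₁) * (1 + chiSq P₂ Q₂) - 1 := by
  set f₁ := P₁.rnDeriv Q₁
  set f₂ := P₂.rnDeriv Q₂
  have hf₁ : Measurable f₁ := Measure.measurable_rnDeriv _ _
  have hf₂ : Measurable f₂ := Measure.measurable_rnDeriv _ _
  have hF : Measurable (fun p : α × β => f₁ p.1 * f₂ p.2) :=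
    (hf₁.comp measurable_fst).mul (hf₂.comp measurable_snd)
  have key : P₁.prod P₂ = (Q₁.prod Q₂).withDensity (fun p => f₁ p.1 * f₂ p.2) := by
    refine Measure.prod_eq fun s t hs ht => ?_
    rw [withDensity_apply _ (hs.prod ht), ← Measure.prod_restrict,
      lintegral_prod_mul hf₁.aemeasurable hf₂.aemeasurable,
      Measure.setLIntegral_rnDeriv h₁, Measure.setLIntegral_rnDeriv h₂]
  have hae : (P₁.prod P₂).rnDeriv (Q₁.prod Q₂) =ᵐ[Q₁.prod Q₂]
      fun p => f₁ p.1 * f₂ p.2 := by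
    rw [key]; exact Measure.rnDeriv_withDensity _ hF
  have hint : (∫ p, (((P₁.prod P₂).rnDeriv (Q₁.prod Q₂) p).toReal) ^ 2 ∂(Q₁.prod Q₂))
      = (∫ x, (f₁ x).toReal ^ 2 ∂Q₁) * (∫ y, (f₂ y).toReal ^ 2 ∂Q₂) := by
    rw [integral_congr_ae (hae.mono fun p hp => by rw [hp])]
    simp_rw [ENNReal.toReal_mul, mul_pow]
    exact integral_prod_mul (fun x => (f₁ x).toReal ^ 2) (fun y => (f₂ y).toReal ^ 2)
  simp only [chiSq, hint]
  ring
end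

section
/- Let μ be a probability measure on SO(p) (p ≥ 2) invariant under simultaneous permutation conjugation and satisfying ∫ tr(U) dμ(U) ≥ (1−δ)p for some δ ∈ (0,1). Then ∫ U₁₁U₂₂ dμ(U) ≥ (1−δ)² − (1−(1−δ)²)/(p−1), and |∫ U₁₂U₂₁ dμ(U)| ≤ (1−(1−δ)²)/(p−1); consequently ∫ (U₁₁U₂₂ + U₁₂U₂₁) dμ(U) ≥ (1−δ)² − 2(1−(1−δ)²)/(p−1). -/
open MeasureTheory Matrix

/-- Matrices inherit the product measurable structure. -/
instance matrixMeasurableSpace {p : ℕ} : MeasurableSpace (Matrix (Fin p) (Fin p) ℝ) :=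
  inferInstanceAs (MeasurableSpace (Fin p → Fin p → ℝ))

variable {p : ℕ} {μ : Measure (Matrix (Fin p) (Fin p) ℝ)} [IsProbabilityMeasure μ]

lemma meas_entry (i j : Fin p) : Measurable (fun U : Matrix (Fin p) (Fin p) ℝ => U i j) :=
  (measurable_pi_apply j).comp (measurable_pi_apply i)

lemma ae_bounds (hSO : ∀ᵐ U ∂μ, U * Uᵀ = 1 ∧ U.det = 1) :
    ∀ᵐ U ∂μ, (∀ i : Fin p, ∑ k, U i k * U i k = 1) ∧ (∀ j : Fin p, ∑ k, U k j * U k j = 1)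
      ∧ (∀ i j : Fin p, |U i j| ≤ 1) := by
  filter_upwards [hSO] with U hU
  obtain ⟨h1, -⟩ := hU
  have h2 : Uᵀ * U = 1 := mul_eq_one_comm.mp h1
  have hrow : ∀ i : Fin p, ∑ k, U i k * U i k = 1 := by
    intro i
    have := congrFun (congrFun h1 i) i
    simpa [Matrix.mul_apply, Matrix.transpose_apply, Matrix.one_apply] using this
  have hcol : ∀ j : Fin p, ∑ k, U k j * U k j = 1 := by
    intro j
    have := congrFun (congrFun h2 j) j
    simpa [Matrix.mul_apply, Matrix.transpose_apply, Matrix.one_apply] using this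
  refine ⟨hrow, hcol, fun i j => ?_⟩
  have hle : U i j * U i j ≤ 1 := by
    rw [← hrow i]
    exact Finset.single_le_sum (f := fun k => U i k * U i k) (fun k _ => mul_self_nonneg _) (Finset.mem_univ j)
  nlinarith [abs_nonneg (U i j), sq_abs (U i j), sq_nonneg (|U i j| - 1)]

lemma int_prod (hSO : ∀ᵐ U ∂μ, U * Uᵀ = 1 ∧ U.det = 1) (i j k l : Fin p) :
    Integrable (fun U : Matrix (Fin p) (Fin p) ℝ => U i j * U k l) μ := by
  refine Integrable.mono' (integrable_const 1)
    ((meas_entry i j).mul (meas_entry k l)).aestronglyMeasurable ?_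
  filter_upwards [ae_bounds hSO] with U hU
  obtain ⟨-, -, hb⟩ := hU
  calc ‖U i j * U k l‖ = |U i j| * |U k l| := by rw [norm_mul]; rfl
  _ ≤ 1 * 1 := mul_le_mul (hb i j) (hb k l) (abs_nonneg _) zero_le_one
  _ = 1 := one_mul 1

lemma int_entry (hSO : ∀ᵐ U ∂μ, U * Uᵀ = 1 ∧ U.det = 1) (i j : Fin p) :
    Integrable (fun U : Matrix (Fin p) (Fin p) ℝ => U i j) μ := by
  refine Integrable.mono' (integrable_const 1) (meas_entry i j).aestronglyMeasurable ?_
  filter_upwards [ae_bounds hSO] with U hU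
  exact hU.2.2 i j

lemma meas_sub (σ : Equiv.Perm (Fin p)) :
    Measurable (fun U : Matrix (Fin p) (Fin p) ℝ => U.submatrix σ σ) :=
  measurable_pi_lambda _ fun i => measurable_pi_lambda _ fun j => meas_entry (σ i) (σ j)

lemma key_inv (hinv : ∀ σ : Equiv.Perm (Fin p),
      Measure.map (fun U => Matrix.submatrix U σ σ) μ = μ)
    (σ : Equiv.Perm (Fin p)) (f : Matrix (Fin p) (Fin p) ℝ → ℝ) (hf : Measurable f) :
    ∫ U, f (U.submatrix σ σ) ∂μ = ∫ U, f U ∂μ := by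
  rw [← integral_map (meas_sub σ).aemeasurable, hinv σ]
  rw [hinv σ]; exact hf.aestronglyMeasurable

-- invariance for a product of two entries
lemma inv_prod (hinv : ∀ σ : Equiv.Perm (Fin p),
      Measure.map (fun U => Matrix.submatrix U σ σ) μ = μ)
    (σ : Equiv.Perm (Fin p)) (i j k l : Fin p) :
    ∫ U, U (σ i) (σ j) * U (σ k) (σ l) ∂μ = ∫ U, U i j * U k l ∂μ := by
  have := key_inv hinv σ (fun U => U i j * U k l) ((meas_entry i j).mul (meas_entry k l))
  simpa [Matrix.submatrix_apply] using this

lemma inv_entry (hinv : ∀ σ : Equiv.Perm (Fin p),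
      Measure.map (fun U => Matrix.submatrix U σ σ) μ = μ)
    (σ : Equiv.Perm (Fin p)) (i j : Fin p) :
    ∫ U, U (σ i) (σ j) ∂μ = ∫ U, U i j ∂μ := by
  have := key_inv hinv σ (fun U => U i j) (meas_entry i j)
  simpa [Matrix.submatrix_apply] using this

lemma exists_perm {e0 e1 i j : Fin p} (h01 : e0 ≠ e1) (hij : i ≠ j) :
    ∃ σ : Equiv.Perm (Fin p), σ e0 = i ∧ σ e1 = j := by
  classical
  set τ := Equiv.swap e0 i with hτ
  set j' := τ j with hj'def
  have hj' : j' ≠ e0 := by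
    intro h
    have h2 : j = τ e0 := by
      have := congrArg τ h
      rwa [hj'def, hτ, Equiv.swap_apply_self] at this
    rw [hτ, Equiv.swap_apply_left] at h2
    exact hij h2.symm
  refine ⟨τ * Equiv.swap e1 j', ?_, ?_⟩
  · simp only [Equiv.Perm.mul_apply]
    rw [Equiv.swap_apply_of_ne_of_ne h01 (Ne.symm hj'), hτ, Equiv.swap_apply_left]
  · simp only [Equiv.Perm.mul_apply]
    rw [Equiv.swap_apply_left, hj'def, hτ, Equiv.swap_apply_self]
set_option maxHeartbeats 1000000 in
theorem stmt18 (p : ℕ) (hp : 2 ≤ p) (δ : ℝ) (hδ : δ ∈ Set.Ioo (0 : ℝ) 1)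
    (μ : Measure (Matrix (Fin p) (Fin p) ℝ)) [IsProbabilityMeasure μ]
    (hSO : ∀ᵐ U ∂μ, U * Uᵀ = 1 ∧ U.det = 1)
    (hinv : ∀ σ : Equiv.Perm (Fin p),
      Measure.map (fun U => Matrix.submatrix U σ σ) μ = μ)
    (htr : ∫ U, U.trace ∂μ ≥ (1 - δ) * p) :
    (∫ U, U ⟨0, by omega⟩ ⟨0, by omega⟩ * U ⟨1, by omega⟩ ⟨1, by omega⟩ ∂μ ≥
        (1 - δ) ^ 2 - (1 - (1 - δ) ^ 2) / ((p : ℝ) - 1)) ∧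
    (|∫ U, U ⟨0, by omega⟩ ⟨1, by omega⟩ * U ⟨1, by omega⟩ ⟨0, by omega⟩ ∂μ| ≤
        (1 - (1 - δ) ^ 2) / ((p : ℝ) - 1)) ∧
    (∫ U, (U ⟨0, by omega⟩ ⟨0, by omega⟩ * U ⟨1, by omega⟩ ⟨1, by omega⟩ +
           U ⟨0, by omega⟩ ⟨1, by omega⟩ * U ⟨1, by omega⟩ ⟨0, by omega⟩) ∂μ ≥
        (1 - δ) ^ 2 - 2 * (1 - (1 - δ) ^ 2) / ((p : ℝ) - 1)) := by
  classical
  obtain ⟨hδ0, hδ1⟩ := hδ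
  set e0 : Fin p := ⟨0, by omega⟩ with he0
  set e1 : Fin p := ⟨1, by omega⟩ with he1
  have h01 : e0 ≠ e1 := by simp [he0, he1, Fin.ext_iff]
  set q : ℝ := (p : ℝ) with hq
  have hq2 : (2 : ℝ) ≤ q := by rw [hq]; exact_mod_cast hp
  have hq0 : (0 : ℝ) < q - 1 := by linarith
  have hq0' : (0 : ℝ) < q := by linarith
  set A := ∫ U, U e0 e0 ∂μ with hA_def
  set s := ∫ U, U e0 e0 * U e0 e0 ∂μ with hs_def
  set B := ∫ U, U e0 e0 * U e1 e1 ∂μ with hB_def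
  set C := ∫ U, U e0 e1 * U e1 e0 ∂μ with hC_def
  set s1 := ∫ U, U e0 e1 * U e0 e1 ∂μ with hs1_def
  set s2 := ∫ U, U e1 e0 * U e1 e0 ∂μ with hs2_def
  -- diagonal entries all have the same integral
  have hdiag : ∀ i : Fin p, ∫ U, U i i ∂μ = A := by
    intro i
    have h := inv_entry hinv (Equiv.swap e0 i) e0 e0
    rw [Equiv.swap_apply_left] at h
    rw [h, hA_def]
  have hsq_diag : ∀ i : Fin p, ∫ U, U i i * U i i ∂μ = s := by
    intro i
    have h := inv_prod hinv (Equiv.swap e0 i) e0 e0 e0 e0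
    rw [Equiv.swap_apply_left] at h
    rw [h, hs_def]
  have hB_off : ∀ i j : Fin p, i ≠ j → ∫ U, U i i * U j j ∂μ = B := by
    intro i j hij
    obtain ⟨σ, hσ0, hσ1⟩ := exists_perm h01 hij
    have h := inv_prod hinv σ e0 e0 e1 e1
    rw [hσ0, hσ1] at h
    rw [h, hB_def]
  -- trace identities
  have htrace_fun : (fun U : Matrix (Fin p) (Fin p) ℝ => U.trace) = fun U => ∑ i, U i i := by
    funext U; simp [Matrix.trace, Matrix.diag]
  have htr_eq : ∫ U, U.trace ∂μ = q * A := by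
    rw [htrace_fun, integral_finset_sum _ (fun i _ => int_entry hSO i i)]
    simp only [hdiag, Finset.sum_const, Finset.card_univ, Fintype.card_fin, nsmul_eq_mul, hq]
  have hA1 : 1 - δ ≤ A := by
    rw [htr_eq] at htr
    nlinarith [htr]
  have hAA : (1 - δ) ^ 2 ≤ A * A := by nlinarith [hA1, hδ1]
  -- trace squared
  have hexpand : ∀ U : Matrix (Fin p) (Fin p) ℝ,
      U.trace * U.trace = ∑ i, ∑ j, U i i * U j j := by
    intro U
    rw [show U.trace = ∑ i, U i i from by simp [Matrix.trace, Matrix.diag],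
      Finset.sum_mul_sum]
  have hinner : ∀ i : Fin p, ∑ j, ∫ U, U i i * U j j ∂μ = s + (q - 1) * B := by
    intro i
    rw [← Finset.add_sum_erase _ _ (Finset.mem_univ i), hsq_diag i]
    have hterm : ∀ j ∈ Finset.univ.erase i, (∫ U, U i i * U j j ∂μ) = B := fun j hj =>
      hB_off i j (Ne.symm (Finset.ne_of_mem_erase hj))
    rw [Finset.sum_congr rfl hterm, Finset.sum_const,
      Finset.card_erase_of_mem (Finset.mem_univ i), Finset.card_univ, Fintype.card_fin,
      nsmul_eq_mul, Nat.cast_sub (by omega : 1 ≤ p), Nat.cast_one, hq]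
  have htr2_eq : ∫ U, U.trace * U.trace ∂μ = q * (s + (q - 1) * B) := by
    calc ∫ U, U.trace * U.trace ∂μ = ∫ U, ∑ i, ∑ j, U i i * U j j ∂μ := by
          simp only [hexpand]
      _ = ∑ i, ∫ U, ∑ j, U i i * U j j ∂μ :=
          integral_finset_sum _ (fun i _ => integrable_finset_sum _
            (fun j _ => int_prod hSO i i j j))
      _ = ∑ i : Fin p, ∑ j, ∫ U, U i i * U j j ∂μ :=
          Finset.sum_congr rfl (fun i _ => integral_finset_sum _
            (fun j _ => int_prod hSO i i j j))
      _ = ∑ _i : Fin p, (s + (q - 1) * B) := Finset.sum_congr rfl (fun i _ => hinner i)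
      _ = q * (s + (q - 1) * B) := by
          simp only [Finset.sum_const, Finset.card_univ, Fintype.card_fin, nsmul_eq_mul, hq]
  -- integrability of trace functions
  have htrInt : Integrable (fun U : Matrix (Fin p) (Fin p) ℝ => U.trace) μ := by
    rw [htrace_fun]; exact integrable_finset_sum _ (fun i _ => int_entry hSO i i)
  have htr2Int : Integrable (fun U : Matrix (Fin p) (Fin p) ℝ => U.trace * U.trace) μ := by
    have h : (fun U : Matrix (Fin p) (Fin p) ℝ => U.trace * U.trace)
        = fun U => ∑ i, ∑ j, U i i * U j j := funext hexpand
    rw [h]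
    exact integrable_finset_sum _ (fun i _ => integrable_finset_sum _
      (fun j _ => int_prod hSO i i j j))
  -- Cauchy-Schwarz
  have hvar : ∀ (f : Matrix (Fin p) (Fin p) ℝ → ℝ) (c : ℝ), Integrable f μ →
      Integrable (fun U => f U * f U) μ →
      (∫ U, f U ∂μ) = c → c * c ≤ ∫ U, f U * f U ∂μ := by
    intro f c hf hff hc
    have h0 : 0 ≤ ∫ U, (f U - c) * (f U - c) ∂μ :=
      integral_nonneg fun U => mul_self_nonneg _
    have heq : (fun U => (f U - c) * (f U - c))
        = fun U => (f U * f U - (2 * c) * f U) + c * c := by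
      funext U; ring
    have hsub : Integrable (fun U => f U * f U - 2 * c * f U) μ := by
      exact hff.sub (hf.const_mul (2 * c))
    have h1 : ∫ U, (f U - c) * (f U - c) ∂μ
        = ∫ U, f U * f U ∂μ - 2 * c * (∫ U, f U ∂μ) + c * c := by
      rw [heq, integral_add hsub (integrable_const (c * c)),
        integral_sub hff (hf.const_mul (2 * c)), integral_const_mul, integral_const,
        probReal_univ, one_smul]
    rw [h1, hc] at h0
    linarith
  have hCS : (q * A) * (q * A) ≤ q * (s + (q - 1) * B) := by
    have h := hvar _ (q * A) htrInt htr2Int htr_eq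
    rwa [htr2_eq] at h
  have hCS2 : A * A ≤ s := hvar _ A (int_entry hSO e0 e0) (int_prod hSO e0 e0 e0 e0) hA_def.symm
  -- s ≤ 1
  have hs_le1 : s ≤ 1 := by
    have hae : ∀ᵐ U ∂μ, U e0 e0 * U e0 e0 ≤ (1 : ℝ) := by
      filter_upwards [ae_bounds hSO] with U hU
      have h := hU.2.2 e0 e0
      nlinarith [abs_nonneg (U e0 e0), abs_mul_abs_self (U e0 e0)]
    calc s ≤ ∫ _U, (1 : ℝ) ∂μ :=
          integral_mono_ae (int_prod hSO e0 e0 e0 e0) (integrable_const 1) hae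
      _ = 1 := by simp
  -- row and column sums
  have hs1_off : ∀ k : Fin p, k ≠ e0 → ∫ U, U e0 k * U e0 k ∂μ = s1 := by
    intro k hk
    have h := inv_prod hinv (Equiv.swap e1 k) e0 e1 e0 e1
    rw [Equiv.swap_apply_of_ne_of_ne h01 (Ne.symm hk), Equiv.swap_apply_left] at h
    rw [h, hs1_def]
  have hs2_off : ∀ k : Fin p, k ≠ e0 → ∫ U, U k e0 * U k e0 ∂μ = s2 := by
    intro k hk
    have h := inv_prod hinv (Equiv.swap e1 k) e1 e0 e1 e0
    rw [Equiv.swap_apply_of_ne_of_ne h01 (Ne.symm hk), Equiv.swap_apply_left] at h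
    rw [h, hs2_def]
  have hrow_int : ∫ U, ∑ k, U e0 k * U e0 k ∂μ = 1 := by
    have hae : (fun U : Matrix (Fin p) (Fin p) ℝ => ∑ k, U e0 k * U e0 k)
        =ᵐ[μ] fun _ => (1 : ℝ) := by
      filter_upwards [ae_bounds hSO] with U hU using hU.1 e0
    rw [integral_congr_ae hae]; simp
  have hcol_int : ∫ U, ∑ k, U k e0 * U k e0 ∂μ = 1 := by
    have hae : (fun U : Matrix (Fin p) (Fin p) ℝ => ∑ k, U k e0 * U k e0)
        =ᵐ[μ] fun _ => (1 : ℝ) := by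
      filter_upwards [ae_bounds hSO] with U hU using hU.2.1 e0
    rw [integral_congr_ae hae]; simp
  have hs1_eq : s + (q - 1) * s1 = 1 := by
    rw [integral_finset_sum _ (fun k _ => int_prod hSO e0 k e0 k),
      ← Finset.add_sum_erase _ _ (Finset.mem_univ e0),
      Finset.sum_congr rfl (fun k hk => hs1_off k (Finset.ne_of_mem_erase hk)),
      Finset.sum_const, Finset.card_erase_of_mem (Finset.mem_univ e0), Finset.card_univ,
      Fintype.card_fin, nsmul_eq_mul, Nat.cast_sub (by omega : 1 ≤ p), Nat.cast_one,
      ← hs_def, ← hq] at hrow_int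
    exact hrow_int
  have hs2_eq : s + (q - 1) * s2 = 1 := by
    rw [integral_finset_sum _ (fun k _ => int_prod hSO k e0 k e0),
      ← Finset.add_sum_erase _ _ (Finset.mem_univ e0),
      Finset.sum_congr rfl (fun k hk => hs2_off k (Finset.ne_of_mem_erase hk)),
      Finset.sum_const, Finset.card_erase_of_mem (Finset.mem_univ e0), Finset.card_univ,
      Fintype.card_fin, nsmul_eq_mul, Nat.cast_sub (by omega : 1 ≤ p), Nat.cast_one,
      ← hs_def, ← hq] at hcol_int
    exact hcol_int
  -- bound on |C|
  have hCabs : |C| ≤ (s1 + s2) / 2 := by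
    have h1 : |C| ≤ ∫ U, |U e0 e1 * U e1 e0| ∂μ := by
      rw [hC_def, ← Real.norm_eq_abs]
      refine (norm_integral_le_integral_norm _).trans_eq ?_
      simp only [Real.norm_eq_abs]
    have h2 : ∫ U, |U e0 e1 * U e1 e0| ∂μ
        ≤ ∫ U, (U e0 e1 * U e0 e1 + U e1 e0 * U e1 e0) / 2 ∂μ := by
      refine integral_mono ((int_prod hSO e0 e1 e1 e0).abs)
        (((int_prod hSO e0 e1 e0 e1).add (int_prod hSO e1 e0 e1 e0)).div_const 2) ?_
      intro U
      nlinarith [abs_mul (U e0 e1) (U e1 e0), sq_nonneg (|U e0 e1| - |U e1 e0|),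
        abs_mul_abs_self (U e0 e1), abs_mul_abs_self (U e1 e0), abs_nonneg (U e0 e1),
        abs_nonneg (U e1 e0)]
    have h3 : ∫ U, (U e0 e1 * U e0 e1 + U e1 e0 * U e1 e0) / 2 ∂μ = (s1 + s2) / 2 := by
      rw [integral_div, integral_add (int_prod hSO e0 e1 e0 e1) (int_prod hSO e1 e0 e1 e0),
        ← hs1_def, ← hs2_def]
    linarith
  -- final algebra
  have key : q * (1 - δ) ^ 2 - 1 ≤ (q - 1) * B := by
    nlinarith [hCS, hs_le1, hAA, hq0', hq2,
      mul_le_mul_of_nonneg_left hAA (mul_nonneg hq0'.le hq0'.le),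
      mul_le_mul_of_nonneg_left hs_le1 hq0'.le]
  have g1 : B ≥ (1 - δ) ^ 2 - (1 - (1 - δ) ^ 2) / (q - 1) := by
    have hfrac : (1 - δ) ^ 2 - B ≤ (1 - (1 - δ) ^ 2) / (q - 1) := by
      rw [le_div_iff₀ hq0]
      nlinarith [key]
    linarith
  have g2 : |C| ≤ (1 - (1 - δ) ^ 2) / (q - 1) := by
    rw [le_div_iff₀ hq0]
    nlinarith [hCabs, hs1_eq, hs2_eq, hCS2, hAA, hq0, abs_nonneg C,
      mul_le_mul_of_nonneg_right hCabs hq0.le]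
  have g3 : ∫ U, (U e0 e0 * U e1 e1 + U e0 e1 * U e1 e0) ∂μ
      ≥ (1 - δ) ^ 2 - 2 * (1 - (1 - δ) ^ 2) / (q - 1) := by
    rw [integral_add (int_prod hSO e0 e0 e1 e1) (int_prod hSO e0 e1 e1 e0),
      ← hB_def, ← hC_def]
    have h2t : 2 * (1 - (1 - δ) ^ 2) / (q - 1)
        = (1 - (1 - δ) ^ 2) / (q - 1) + (1 - (1 - δ) ^ 2) / (q - 1) := by ring
    have := neg_abs_le C
    linarith
  exact ⟨g1, g2, g3⟩
end
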